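/- Let a(n) be the number of pairs (f, P) where f is a parking function on [n] and P is a set partition of [n] each of whose blocks is contained in a single fiber of f (equivalently, P refines the partition of [n] into the nonempty fibers of f); set a(0) = 1. Then the exponential generating series A(t) = Σ_{n≥0} a(n) · t^n/n! satisfies the functional equation A(t) = exp(exp(t·A(t)) − 1) in ℚ[[t]]. In particular a(0),…,a(5) = 1, 1, 4, 29, 311, 4447. -/

import Mathlib

open PowerSeries

/-- A parking function on `[n] = {1, …, n}` (modeled by `Fin n`, with `i : Fin n`
representing the value `i + 1`). -/
def IsParkingFunction (n : ℕ) (f : Fin n → Fin n) : Prop :=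
  ∀ k ∈ Finset.Icc 1 n, k ≤ (Finset.univ.filter fun i => (f i : ℕ) + 1 ≤ k).card

/-- `a n` is the number of pairs `(f, P)` where `f` is a parking function on `[n]`
and `P` is a set partition of `[n]` each of whose blocks is contained in a single
fiber of `f`.  (For `n = 0` this is `1`.) -/
noncomputable def aCount (n : ℕ) : ℕ :=
  Nat.card ((f : {f : Fin n → Fin n // IsParkingFunction n f}) ×
    {P : Finpartition (Finset.univ : Finset (Fin n)) //
      ∀ b ∈ P.parts, ∃ c : Fin n, ∀ x ∈ b, f.1 x = c})

/-- The exponential generating series `A(t) = Σ_{n ≥ 0} a(n) · t^n / n!`. -/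
noncomputable def A : PowerSeries ℚ :=
  PowerSeries.mk fun n => (aCount n : ℚ) / (n.factorial : ℚ)

/-- Composition `F(g)` of formal power series, valid (i.e., agreeing with the usual
substitution) whenever the constant term of `g` is zero. -/
noncomputable def seriesComp (F g : PowerSeries ℚ) : PowerSeries ℚ :=
  PowerSeries.mk fun n =>
    PowerSeries.coeff (R := ℚ) n (∑ k ∈ Finset.range (n + 1), PowerSeries.coeff (R := ℚ) k F • g ^ k)


noncomputable section
open Finset PowerSeries

/-- A "colored partition" structure on a linearly ordered type `α` with colors in `μ`,
encoded by the function sending each element to (min of its block, color of its block). -/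
abbrev DSet (α : Type*) [LinearOrder α] (μ : Type*) : Type _ :=
  {g : α → α × μ // ∀ x, (g x).1 ≤ x ∧ g (g x).1 = g x}

instance {α μ : Type*} [LinearOrder α] [Finite α] [Finite μ] : Finite (DSet α μ) :=
  Subtype.finite

noncomputable instance {α μ : Type*} [LinearOrder α] [Finite α] [Finite μ] :
    Fintype (DSet α μ) := Fintype.ofFinite _

/-- Transport of `DSet` along an order isomorphism. -/
def DSet.congrOrder {α β μ : Type*} [LinearOrder α] [LinearOrder β] (e : α ≃o β) :
    DSet α μ ≃ DSet β μ where
  toFun g := ⟨fun y => (e ((g.1 (e.symm y)).1), (g.1 (e.symm y)).2), by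
    intro y
    constructor
    · have h := (g.2 (e.symm y)).1
      calc e ((g.1 (e.symm y)).1) ≤ e (e.symm y) := e.monotone h
        _ = y := e.apply_symm_apply y
    · have h2 := (g.2 (e.symm y)).2
      simp only [e.symm_apply_apply]
      rw [h2]⟩
  invFun g := ⟨fun x => (e.symm ((g.1 (e x)).1), (g.1 (e x)).2), by
    intro x
    constructor
    · have h := (g.2 (e x)).1
      calc e.symm ((g.1 (e x)).1) ≤ e.symm (e x) := e.symm.monotone h
        _ = x := e.symm_apply_apply x
    · have h2 := (g.2 (e x)).2
      simp only [e.apply_symm_apply]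
      rw [h2]⟩
  left_inv g := by
    apply Subtype.ext
    funext x
    simp only [e.apply_symm_apply, e.symm_apply_apply]
  right_inv g := by
    apply Subtype.ext
    funext y
    simp only [e.apply_symm_apply, e.symm_apply_apply]

/-- Transport of `DSet` along a color equivalence. -/
def DSet.congrColor {α μ ν : Type*} [LinearOrder α] (e : μ ≃ ν) :
    DSet α μ ≃ DSet α ν where
  toFun g := ⟨fun x => ((g.1 x).1, e ((g.1 x).2)), by
    intro x
    refine ⟨(g.2 x).1, ?_⟩
    have h2 := (g.2 x).2
    have hf := congrArg Prod.fst h2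
    have hs := congrArg Prod.snd h2
    simp [hf, hs]⟩
  invFun g := ⟨fun x => ((g.1 x).1, e.symm ((g.1 x).2)), by
    intro x
    refine ⟨(g.2 x).1, ?_⟩
    have h2 := (g.2 x).2
    have hf := congrArg Prod.fst h2
    have hs := congrArg Prod.snd h2
    simp [hf, hs]⟩
  left_inv g := by apply Subtype.ext; funext x; simp
  right_inv g := by apply Subtype.ext; funext x; simp

/-- `Fc c n` : the number of pairs (partition of `Fin n`, coloring of blocks by `Fin c`). -/
def Fc (c n : ℕ) : ℕ := Nat.card (DSet (Fin n) (Fin c))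

lemma Fc_zero (c : ℕ) : Fc c 0 = 1 := by
  rw [Fc, Nat.card_eq_one_iff_unique]
  constructor
  · constructor
    intro g h
    apply Subtype.ext
    funext x
    exact absurd x.2 (by omega)
  · exact ⟨⟨fun x => absurd x.2 (by omega), fun x => absurd x.2 (by omega)⟩⟩

section Fiber

variable {n : ℕ} {μ : Type*}

/-- the block containing `0`. -/
def blk (g : DSet (Fin (n+1)) μ) : Finset (Fin (n+1)) :=
  univ.filter (fun x => (g.1 x).1 = 0)

lemma mem_blk (g : DSet (Fin (n+1)) μ) (x : Fin (n+1)) : x ∈ blk g ↔ (g.1 x).1 = 0 := by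
  simp [blk]

variable (s : Finset (Fin (n+1)))

/-- restriction of a structure to the complement of the block of 0 -/
def restr (g : DSet (Fin (n+1)) μ) (hs : blk g = s) : DSet ↥(sᶜ : Finset (Fin (n+1))) μ := by
  have hchar : ∀ x, x ∈ s ↔ (g.1 x).1 = 0 := fun x => by rw [← hs, mem_blk]
  refine ⟨fun y => (⟨(g.1 ↑y).1, ?_⟩, (g.1 ↑y).2), ?_⟩
  · have hy : (y : Fin (n+1)) ∉ s := Finset.mem_compl.1 y.2
    rw [Finset.mem_compl, hchar]
    have := congrArg Prod.fst ((g.2 ↑y).2)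
    rw [this]
    exact fun h => hy ((hchar ↑y).2 h)
  · intro y
    refine ⟨(g.2 ↑y).1, ?_⟩
    have h2 := (g.2 ↑y).2
    have hf := congrArg Prod.fst h2
    have hsnd := congrArg Prod.snd h2
    exact Prod.ext (Subtype.ext hf) hsnd

/-- gluing a block containing 0 with a structure on the complement -/
def glueFun (c : μ) (g' : DSet ↥(sᶜ : Finset (Fin (n+1))) μ) : Fin (n+1) → Fin (n+1) × μ :=
  fun x => if hx : x ∈ s then ((0 : Fin (n+1)), c)
    else (((g'.1 ⟨x, Finset.mem_compl.mpr hx⟩).1 : Fin (n+1)), (g'.1 ⟨x, Finset.mem_compl.mpr hx⟩).2)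

lemma glueFun_mem (c : μ) (g' : DSet ↥(sᶜ : Finset (Fin (n+1))) μ) {x : Fin (n+1)} (hx : x ∈ s) :
    glueFun s c g' x = ((0 : Fin (n+1)), c) := dif_pos hx

lemma glueFun_not_mem (c : μ) (g' : DSet ↥(sᶜ : Finset (Fin (n+1))) μ) {x : Fin (n+1)}
    (hx : x ∉ s) : glueFun s c g' x
      = (((g'.1 ⟨x, Finset.mem_compl.mpr hx⟩).1 : Fin (n+1)),
          (g'.1 ⟨x, Finset.mem_compl.mpr hx⟩).2) := dif_neg hx

lemma glueFun_fst_not_mem (c : μ) (g' : DSet ↥(sᶜ : Finset (Fin (n+1))) μ) {x : Fin (n+1)}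
    (hx : x ∉ s) : (glueFun s c g' x).1 ∉ s := by
  rw [glueFun_not_mem s c g' hx]
  exact Finset.mem_compl.1 (g'.1 ⟨x, Finset.mem_compl.mpr hx⟩).1.2

variable (h0 : (0:Fin (n+1)) ∈ s)
include h0

lemma glueFun_prop (c : μ) (g' : DSet ↥(sᶜ : Finset (Fin (n+1))) μ) :
    ∀ x, (glueFun s c g' x).1 ≤ x ∧ glueFun s c g' (glueFun s c g' x).1 = glueFun s c g' x := by
  intro x
  by_cases hx : x ∈ s
  · rw [glueFun_mem s c g' hx]
    exact ⟨Fin.zero_le x, glueFun_mem s c g' h0⟩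
  · have hfst := glueFun_fst_not_mem s c g' hx
    rw [glueFun_not_mem s c g' hx]
    set y : ↥(sᶜ : Finset (Fin (n+1))) := ⟨x, Finset.mem_compl.mpr hx⟩ with hy
    constructor
    · exact (g'.2 y).1
    · simp only
      rw [glueFun_not_mem s c g' (by rw [glueFun_not_mem s c g' hx] at hfst; exact hfst)]
      have h2 := (g'.2 y).2
      have hf := congrArg (fun z => ((Prod.fst z : ↥(sᶜ : Finset (Fin (n+1)))) : Fin (n+1))) h2
      have hsnd := congrArg Prod.snd h2
      have hcast : (⟨((g'.1 y).1 : Fin (n+1)), _⟩ : ↥(sᶜ : Finset (Fin (n+1)))) = (g'.1 y).1 :=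
        Subtype.ext rfl
      rw [hcast]
      exact Prod.ext hf hsnd

lemma blk_glueFun (c : μ) (g' : DSet ↥(sᶜ : Finset (Fin (n+1))) μ) :
    blk ⟨glueFun s c g', glueFun_prop s h0 c g'⟩ = s := by
  apply Finset.ext
  intro x
  rw [mem_blk]
  show (glueFun s c g' x).1 = 0 ↔ x ∈ s
  by_cases hx : x ∈ s
  · rw [glueFun_mem s c g' hx]
    exact ⟨fun _ => hx, fun _ => rfl⟩
  · have hfst := glueFun_fst_not_mem s c g' hx
    constructor
    · intro h
      exfalso
      rw [h] at hfst
      exact hfst h0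
    · intro h; exact absurd h hx

def fiber_equiv [DecidableEq μ] :
    {g : DSet (Fin (n+1)) μ // blk g = s} ≃ μ × DSet ↥(sᶜ : Finset (Fin (n+1))) μ where
  toFun G := ((G.1.1 0).2, restr s G.1 G.2)
  invFun P := ⟨⟨glueFun s P.1 P.2, glueFun_prop s h0 P.1 P.2⟩, blk_glueFun s h0 P.1 P.2⟩
  left_inv := by
    rintro ⟨⟨g, hg⟩, hs⟩
    apply Subtype.ext
    apply Subtype.ext
    funext x
    show glueFun s (g 0).2 (restr s ⟨g, hg⟩ hs) x = g x
    have hchar : ∀ z, z ∈ s ↔ (g z).1 = 0 := fun z => by rw [← hs, mem_blk]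
    by_cases hx : x ∈ s
    · rw [glueFun_mem s _ _ hx]
      have hx0 : (g x).1 = 0 := (hchar x).1 hx
      have h1 : g ((g x).1) = g x := (hg x).2
      rw [hx0] at h1
      rw [← h1]
      exact Prod.ext ((hchar 0).1 h0).symm rfl
    · rw [glueFun_not_mem s _ _ hx]
      rfl
  right_inv := by
    rintro ⟨c, g'⟩
    refine Prod.ext ?_ ?_
    · show (glueFun s c g' 0).2 = c
      rw [glueFun_mem s c g' h0]
    · apply Subtype.ext
      funext y
      have hy : (y : Fin (n+1)) ∉ s := Finset.mem_compl.1 y.2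
      show ((⟨(glueFun s c g' ↑y).1, _⟩ : ↥(sᶜ : Finset (Fin (n+1)))), (glueFun s c g' ↑y).2)
        = g'.1 y
      have he : glueFun s c g' ↑y
          = (((g'.1 ⟨↑y, Finset.mem_compl.mpr hy⟩).1 : Fin (n+1)),
              (g'.1 ⟨↑y, Finset.mem_compl.mpr hy⟩).2) := glueFun_not_mem s c g' hy
      have hyy : (⟨↑y, Finset.mem_compl.mpr hy⟩ : ↥(sᶜ : Finset (Fin (n+1)))) = y :=
        Subtype.ext rfl
      rw [hyy] at he
      refine Prod.ext (Subtype.ext ?_) ?_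
      · show ((glueFun s c g' ↑y).1 : Fin (n+1)) = ((g'.1 y).1 : Fin (n+1))
        rw [he]
      · show (glueFun s c g' ↑y).2 = (g'.1 y).2
        rw [he]

end Fiber

lemma nat_card_fiber_sum {α β : Type*} [Fintype α] [DecidableEq β] (f : α → β)
    (t : Finset β) (h : ∀ a, f a ∈ t) :
    Nat.card α = ∑ b ∈ t, Nat.card {a // f a = b} := by
  classical
  have h1 : (univ : Finset α).card = ∑ b ∈ t, (univ.filter (fun a => f a = b)).card :=
    Finset.card_eq_sum_card_fiberwise (fun a _ => h a)
  rw [Nat.card_eq_fintype_card, ← Finset.card_univ, h1]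
  apply Finset.sum_congr rfl
  intro b _
  rw [Nat.card_eq_fintype_card, Fintype.card_subtype]

lemma Fc_card_compl {n : ℕ} {c : ℕ} (s : Finset (Fin (n+1))) :
    Nat.card (DSet ↥(sᶜ : Finset (Fin (n+1))) (Fin c)) = Fc c (n + 1 - s.card) := by
  have hcard : Fintype.card ↥(sᶜ : Finset (Fin (n+1))) = n + 1 - s.card := by
    rw [Fintype.card_coe, Finset.card_compl]
    simp
  rw [Fc]
  exact Nat.card_congr (DSet.congrOrder (Fintype.orderIsoFinOfCardEq _ hcard)).symm

lemma Fc_succ (c n : ℕ) :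
    Fc c (n+1) = c * ∑ j ∈ range (n+1), n.choose j * Fc c j := by
  classical
  rw [Fc]
  rw [nat_card_fiber_sum (blk (μ := Fin c)) (univ.filter (fun s => (0:Fin (n+1)) ∈ s))
    (fun g => by
      rw [Finset.mem_filter]
      exact ⟨Finset.mem_univ _, (mem_blk g 0).2 (Fin.le_zero_iff.1 (g.2 0).1)⟩)]
  have step1 : ∀ s ∈ univ.filter (fun s => (0:Fin (n+1)) ∈ s),
      Nat.card {g : DSet (Fin (n+1)) (Fin c) // blk g = s} = c * Fc c (n + 1 - s.card) := by
    intro s hs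
    rw [Finset.mem_filter] at hs
    rw [Nat.card_congr (fiber_equiv s hs.2), Nat.card_prod, Nat.card_eq_fintype_card,
      Fintype.card_fin]
    congr 1
    exact Fc_card_compl s
  rw [Finset.sum_congr rfl step1]
  -- reindex by complement
  rw [Finset.sum_nbij' (i := fun s => sᶜ) (j := fun t => tᶜ)
    (s := univ.filter (fun s => (0:Fin (n+1)) ∈ s)) (t := ((univ : Finset (Fin (n+1))).erase 0).powerset)
    (f := fun s => c * Fc c (n + 1 - s.card)) (g := fun t => c * Fc c t.card)]
  · rw [Finset.sum_powerset]
    have hcard : ((univ : Finset (Fin (n+1))).erase 0).card = n := by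
      rw [Finset.card_erase_of_mem (Finset.mem_univ _)]
      simp
    rw [hcard, Finset.mul_sum]
    apply Finset.sum_congr rfl
    intro j hj
    rw [Finset.mem_range] at hj
    rw [Finset.sum_congr rfl (fun t ht => by
      rw [(Finset.mem_powersetCard.1 ht).2]), Finset.sum_const, Finset.card_powersetCard, hcard]
    ring
  · intro s hs
    rw [Finset.mem_filter] at hs
    rw [Finset.mem_powerset]
    intro x hx
    rw [Finset.mem_compl] at hx
    rw [Finset.mem_erase]
    exact ⟨fun h => hx (h ▸ hs.2), Finset.mem_univ x⟩
  · intro t ht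
    rw [Finset.mem_powerset] at ht
    rw [Finset.mem_filter]
    refine ⟨Finset.mem_univ _, ?_⟩
    rw [Finset.mem_compl]
    intro h0t
    have := ht h0t
    rw [Finset.mem_erase] at this
    exact this.1 rfl
  · intro s _; exact compl_compl s
  · intro t _; exact compl_compl t
  · intro s hs
    congr 1
    rw [Finset.card_compl]
    simp

def pkZ (n : ℕ) (v : Fin n → ZMod (n+1)) : Prop :=
  ∀ k ∈ Finset.Icc 1 n, k ≤ (univ.filter fun i => (v i).val + 1 ≤ k).card

section Cycle

variable {n : ℕ} (v : Fin n → ZMod (n+1))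

private def Mv (u : ℕ) : ℕ := (univ.filter fun i => v i = (u : ZMod (n+1))).card

private def Qv (t : ℕ) : ℕ := ∑ u ∈ range t, Mv v u

private def Rv (t : ℕ) : ℤ := (Qv v t : ℤ) - t

lemma Mv_per (u : ℕ) : Mv v (u + (n+1)) = Mv v u := by
  unfold Mv
  congr 1
  apply Finset.filter_congr
  intro i _
  have : ((u + (n+1) : ℕ) : ZMod (n+1)) = (u : ZMod (n+1)) := by
    push_cast
    simp
  rw [this]

lemma Qv_add (t k : ℕ) : Qv v (t + k) = Qv v t + ∑ u ∈ range k, Mv v (t + u) :=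
  Finset.sum_range_add _ t k

lemma Qv_period_sum : ∀ t, ∑ u ∈ range (n+1), Mv v (t + u) = n := by
  have base : ∑ u ∈ range (n+1), Mv v u = n := by
    have h1 : (univ : Finset (Fin n)).card
        = ∑ u ∈ range (n+1), (univ.filter fun i => (v i).val = u).card := by
      apply Finset.card_eq_sum_card_fiberwise
      intro i _
      rw [Finset.mem_coe, Finset.mem_range]
      exact ZMod.val_lt (v i)
    rw [Finset.card_univ, Fintype.card_fin] at h1
    conv_rhs => rw [h1]
    apply Finset.sum_congr rfl
    intro u hu
    rw [Finset.mem_range] at hu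
    unfold Mv
    congr 1
    apply Finset.filter_congr
    intro i _
    constructor
    · intro h; rw [h, ZMod.val_cast_of_lt hu]
    · intro h
      have : ((u : ℕ) : ZMod (n+1)) = ((v i).val : ZMod (n+1)) := by rw [h]
      rw [ZMod.natCast_val, ZMod.cast_id] at this
      exact this.symm
  intro t
  induction t with
  | zero => simpa using base
  | succ t ih =>
      have e1 : ∑ u ∈ range (n+1), Mv v (t + u)
          = (∑ u ∈ range n, Mv v (t + 1 + u)) + Mv v t := by
        rw [Finset.sum_range_succ' (fun u => Mv v (t + u)) n]
        simp only [Nat.add_zero]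
        congr 1
        apply Finset.sum_congr rfl
        intro u _
        congr 1
        omega
      have e2 : ∑ u ∈ range (n+1), Mv v (t + 1 + u)
          = (∑ u ∈ range n, Mv v (t + 1 + u)) + Mv v t := by
        rw [Finset.sum_range_succ]
        congr 1
        have : t + 1 + n = t + (n+1) := by omega
        rw [this, Mv_per]
      rw [e2, ← e1, ih]

lemma Rv_per (t : ℕ) : Rv v (t + (n+1)) = Rv v t - 1 := by
  unfold Rv
  rw [Qv_add, Qv_period_sum]
  push_cast
  ring

/-- the window condition at starting position `s` -/
def CondS (s : ℕ) : Prop := ∀ k, 1 ≤ k → k ≤ n → Rv v s ≤ Rv v (s + k)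

lemma exists_unique_start : ∃! s, s ≤ n ∧ CondS v s := by
  have hex : ∃ s, s ≤ n ∧ ∀ t ≤ n, Rv v s ≤ Rv v t := by
    obtain ⟨s, hs, hmin⟩ := Finset.exists_min_image (range (n+1)) (Rv v) ⟨0, by simp⟩
    rw [Finset.mem_range] at hs
    exact ⟨s, by omega, fun t ht => hmin t (by rw [Finset.mem_range]; omega)⟩
  classical
  obtain ⟨s₀, ⟨hs₀n, hs₀min⟩, hmin⟩ :
      ∃ s₀, (s₀ ≤ n ∧ ∀ t ≤ n, Rv v s₀ ≤ Rv v t)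
        ∧ ∀ m < s₀, ¬(m ≤ n ∧ ∀ t ≤ n, Rv v m ≤ Rv v t) :=
    ⟨Nat.find hex, Nat.find_spec hex, fun m hm => Nat.find_min hex hm⟩
  have hleast : ∀ t < s₀, t ≤ n → Rv v s₀ + 1 ≤ Rv v t := by
    intro t ht htn
    have hnot := hmin t ht
    push_neg at hnot
    by_contra hcon
    push_neg at hcon
    have heq : Rv v t ≤ Rv v s₀ := by omega
    have : ∀ t' ≤ n, Rv v t ≤ Rv v t' := fun t' ht' => le_trans heq (hs₀min t' ht')
    obtain ⟨t', ht', hlt⟩ := hnot htn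
    exact absurd (this t' ht') (not_le.2 hlt)
  refine ⟨s₀, ⟨hs₀n, ?_⟩, ?_⟩
  · -- CondS s₀
    intro k hk1 hkn
    rcases le_or_gt (s₀ + k) n with h | h
    · exact hs₀min _ h
    · have ht' : s₀ + k = (s₀ + k - (n+1)) + (n+1) := by omega
      set t' := s₀ + k - (n+1) with ht'def
      have ht'lt : t' < s₀ := by omega
      have ht'n : t' ≤ n := by omega
      rw [ht', Rv_per]
      have := hleast t' ht'lt ht'n
      omega
  · -- uniqueness
    intro s' ⟨hs'n, hs'c⟩
    by_contra hne
    rcases Nat.lt_or_ge s' s₀ with hlt | hge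
    · -- s' < s₀ : use CondS s' with k = s₀ - s', then k' = s' + (n+1) - s₀
      have h1 := hs'c (s₀ - s') (by omega) (by omega)
      rw [show s' + (s₀ - s') = s₀ by omega] at h1
      have h2 := hleast s' hlt hs'n
      omega
    · have hlt : s₀ < s' := by omega
      have h1 := hs₀min s' hs'n
      have h2 := hs'c (s₀ + (n+1) - s') (by omega) (by omega)
      rw [show s' + (s₀ + (n+1) - s') = s₀ + (n+1) by omega, Rv_per] at h2
      omega

lemma window_card (c : ZMod (n+1)) (k : ℕ) (hk : k ≤ n) :
    (univ.filter fun i => (v i + c).val + 1 ≤ k).card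
      = ∑ u ∈ range k, Mv v ((-c).val + u) := by
  set s := (-c).val with hs
  have h1 : (univ.filter fun i => (v i + c).val + 1 ≤ k).card
      = ∑ u ∈ range k, ((univ.filter fun i => (v i + c).val + 1 ≤ k).filter
          (fun i => (v i + c).val = u)).card := by
    apply Finset.card_eq_sum_card_fiberwise
    intro i hi
    rw [Finset.mem_coe, Finset.mem_filter] at hi
    rw [Finset.mem_coe, Finset.mem_range]
    dsimp only
    omega
  rw [h1]
  apply Finset.sum_congr rfl
  intro u hu
  rw [Finset.mem_range] at hu
  unfold Mv
  congr 1
  apply Finset.ext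
  intro i
  simp only [Finset.mem_filter, Finset.mem_univ, true_and]
  constructor
  · rintro ⟨_, h2⟩
    have : v i + c = (u : ZMod (n+1)) := by
      have : (((v i + c).val : ℕ) : ZMod (n+1)) = ((u:ℕ) : ZMod (n+1)) := by rw [h2]
      rw [ZMod.natCast_val, ZMod.cast_id] at this
      exact this
    have hc : v i = (u : ZMod (n+1)) - c := by rw [← this]; ring
    rw [hc]
    have : ((s + u : ℕ) : ZMod (n+1)) = (u : ZMod (n+1)) - c := by
      push_cast
      rw [hs, ZMod.natCast_val, ZMod.cast_id]
      ring
    rw [this]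
  · intro h
    have hval : (v i + c).val = u := by
      have : v i + c = (u : ZMod (n+1)) := by
        rw [h]
        have : ((s + u : ℕ) : ZMod (n+1)) = (u : ZMod (n+1)) - c := by
          push_cast
          rw [hs, ZMod.natCast_val, ZMod.cast_id]
          ring
        rw [this]
        ring
      rw [this, ZMod.val_cast_of_lt (by omega)]
    exact ⟨by omega, hval⟩

lemma pk_iff_cond (c : ZMod (n+1)) :
    pkZ n (fun i => v i + c) ↔ CondS v ((-c).val) := by
  set s := (-c).val with hs
  have key : ∀ k, k ≤ n →
      ((k : ℕ) ≤ (univ.filter fun i => (v i + c).val + 1 ≤ k).card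
        ↔ Rv v s ≤ Rv v (s + k)) := by
    intro k hk
    have hw := window_card v c k hk
    have hQn : Qv v (s+k) = Qv v s + (univ.filter fun i => (v i + c).val + 1 ≤ k).card := by
      rw [Qv_add, hw]
    have hQ : (Qv v (s+k) : ℤ)
        = (Qv v s : ℤ) + ((univ.filter fun i => (v i + c).val + 1 ≤ k).card : ℤ) := by
      exact_mod_cast hQn
    unfold Rv
    omega
  unfold pkZ CondS
  constructor
  · intro h k hk1 hkn
    exact (key k hkn).1 (h k (Finset.mem_Icc.2 ⟨hk1, hkn⟩))
  · intro h k hk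
    rw [Finset.mem_Icc] at hk
    exact (key k hk.2).2 (h k hk.1 hk.2)

theorem cycle_lemma : ∃! c : ZMod (n+1), pkZ n (fun i => v i + c) := by
  obtain ⟨s₀, ⟨hs₀n, hs₀c⟩, huniq⟩ := exists_unique_start v
  refine ⟨-((s₀ : ℕ) : ZMod (n+1)), ?_, ?_⟩
  · have hval : (-(-((s₀ : ℕ) : ZMod (n+1)))).val = s₀ := by
      rw [neg_neg, ZMod.val_cast_of_lt (by omega)]
    refine (pk_iff_cond v _).2 ?_
    rw [hval]
    exact hs₀c
  · intro c' hc'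
    rw [pk_iff_cond v c'] at hc'
    have hle : (-c').val ≤ n := by
      have := ZMod.val_lt (-c')
      omega
    have := huniq ((-c').val) ⟨hle, hc'⟩
    have h2 : -c' = ((s₀ : ℕ) : ZMod (n+1)) := by
      rw [← this, ZMod.natCast_val, ZMod.cast_id]
    rw [← h2, neg_neg]

end Cycle

section Pollak

variable {n : ℕ}

def shiftD (c : ZMod (n+1)) (g : DSet (Fin n) (ZMod (n+1))) : DSet (Fin n) (ZMod (n+1)) := by
  refine ⟨fun x => ((g.1 x).1, (g.1 x).2 + c), ?_⟩
  intro x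
  refine ⟨(g.2 x).1, ?_⟩
  have h2 := (g.2 x).2
  have hf := congrArg Prod.fst h2
  have hsnd := congrArg Prod.snd h2
  simp only [hf, hsnd]

theorem pollak_card :
    Nat.card (DSet (Fin n) (ZMod (n+1)))
      = (n+1) * Nat.card {g : DSet (Fin n) (ZMod (n+1)) // pkZ n (fun i => (g.1 i).2)} := by
  have e : (ZMod (n+1) × {g : DSet (Fin n) (ZMod (n+1)) // pkZ n (fun i => (g.1 i).2)})
      ≃ DSet (Fin n) (ZMod (n+1)) := by
    apply Equiv.ofBijective (fun P => shiftD P.1 P.2.1)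
    constructor
    · rintro ⟨c, g, hg⟩ ⟨c', g', hg'⟩ heq
      have heqf := congrArg Subtype.val heq
      simp only [shiftD] at heqf
      -- snd components
      have hsnd : ∀ x, (g.1 x).2 + c = (g'.1 x).2 + c' := by
        intro x
        have := congrArg (fun f => (f x).2) heqf
        simpa using this
      have hfst : ∀ x, (g.1 x).1 = (g'.1 x).1 := by
        intro x
        have := congrArg (fun f => (f x).1) heqf
        simpa using this
      have hpk1 : pkZ n (fun i => ((g.1 i).2 + c) + (-c)) := by
        have e1 : (fun i : Fin n => ((g.1 i).2 + c) + (-c)) = fun i => (g.1 i).2 := by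
          funext i; ring
        rw [e1]; exact hg
      have hpk2 : pkZ n (fun i => ((g.1 i).2 + c) + (-c')) := by
        have e2 : (fun i : Fin n => ((g.1 i).2 + c) + (-c')) = fun i => (g'.1 i).2 := by
          funext i; rw [hsnd i]; ring
        rw [e2]; exact hg'
      obtain ⟨c₀, _, huniq⟩ := cycle_lemma (fun i => (g.1 i).2 + c)
      have hcc : -c = -c' := by
        rw [huniq _ hpk1, huniq _ hpk2]
      have hcc' : c = c' := by
        have := congrArg Neg.neg hcc; simpa using this
      subst hcc'
      have hgg : g = g' := by
        apply Subtype.ext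
        funext x
        have h2 := hsnd x
        have : (g.1 x).2 = (g'.1 x).2 := by
          have := add_right_cancel h2
          exact this
        exact Prod.ext (hfst x) this
      subst hgg
      rfl
    · intro h
      set w : Fin n → ZMod (n+1) := fun i => (h.1 i).2 with hw
      obtain ⟨c, hc, _⟩ := cycle_lemma w
      refine ⟨⟨-c, ⟨shiftD c h, ?_⟩⟩, ?_⟩
      · show pkZ n (fun i => ((shiftD c h).1 i).2)
        have : (fun i => ((shiftD c h).1 i).2) = fun i => w i + c := by
          funext i; rfl
        rw [this]; exact hc
      · show shiftD (-c) (shiftD c h) = h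
        apply Subtype.ext
        funext x
        show (((h.1 x).1, ((h.1 x).2 + c) + -c)) = h.1 x
        rw [add_neg_cancel_right]
  rw [← Nat.card_congr e, Nat.card_prod, Nat.card_eq_fintype_card (α := ZMod (n+1)), ZMod.card]

end Pollak
-- ============ section 4 proper ============

section Bridge

variable {n : ℕ}

/-- values of a `pkZ` structure avoid the residue `n`. -/
lemma pkZ_val_lt {v : Fin n → ZMod (n+1)} (hv : pkZ n v) (i : Fin n) : (v i).val < n := by
  rcases Nat.eq_zero_or_pos n with h | h
  · have := i.isLt
    omega
  · have hn := hv n (Finset.mem_Icc.2 ⟨h, le_rfl⟩)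
    have hsub : (univ.filter fun i => (v i).val + 1 ≤ n) = univ := by
      apply Finset.eq_univ_of_card
      have h1 := Finset.card_filter_le (univ : Finset (Fin n)) (fun i => (v i).val + 1 ≤ n)
      rw [Finset.card_univ, Fintype.card_fin] at h1
      rw [Fintype.card_fin]
      omega
    have hi : i ∈ univ.filter fun i => (v i).val + 1 ≤ n := by
      rw [hsub]; exact Finset.mem_univ i
    rw [Finset.mem_filter] at hi
    omega

/-- transfer between `ZMod (n+1)`-colored parking structures and `Fin n`-colored ones. -/
def pkEquiv :
    {g : DSet (Fin n) (ZMod (n+1)) // pkZ n (fun i => (g.1 i).2)}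
      ≃ {g : DSet (Fin n) (Fin n) // IsParkingFunction n (fun i => (g.1 i).2)} where
  toFun G := by
    refine ⟨⟨fun x => ((G.1.1 x).1, ⟨((G.1.1 x).2).val, pkZ_val_lt G.2 x⟩), ?_⟩, ?_⟩
    · intro x
      refine ⟨(G.1.2 x).1, ?_⟩
      have h2 := (G.1.2 x).2
      have hf := congrArg Prod.fst h2
      have hs := congrArg (fun p => (Prod.snd p).val) h2
      exact Prod.ext hf (Fin.ext hs)
    · intro k hk
      have h := G.2 k hk
      have e : (univ.filter fun i =>
            ((⟨((G.1.1 i).2).val, pkZ_val_lt G.2 i⟩ : Fin n) : ℕ) + 1 ≤ k)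
          = (univ.filter fun i => ((G.1.1 i).2).val + 1 ≤ k) := by
        apply Finset.filter_congr
        intro i _
        exact Iff.rfl
      rw [show (Finset.univ.filter fun i =>
          ((fun x => ((G.1.1 x).1, (⟨((G.1.1 x).2).val, pkZ_val_lt G.2 x⟩ : Fin n))) i).2.1 + 1 ≤ k)
        = (univ.filter fun i => ((G.1.1 i).2).val + 1 ≤ k) from e]
      exact h
  invFun G := by
    refine ⟨⟨fun x => ((G.1.1 x).1, ((((G.1.1 x).2 : ℕ)) : ZMod (n+1))), ?_⟩, ?_⟩
    · intro x
      refine ⟨(G.1.2 x).1, ?_⟩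
      have h2 := (G.1.2 x).2
      have hf := congrArg Prod.fst h2
      have hs := congrArg (fun p => ((Prod.snd p : Fin n) : ℕ)) h2
      refine Prod.ext hf ?_
      simp only
      rw [hs]
    · intro k hk
      have h := G.2 k hk
      have e : ∀ i : Fin n, ((((G.1.1 i).2 : ℕ) : ZMod (n+1))).val = ((G.1.1 i).2 : ℕ) := by
        intro i
        exact ZMod.val_cast_of_lt (by have := ((G.1.1 i).2).2; omega)
      have e2 : (univ.filter fun i => ((((G.1.1 i).2 : ℕ) : ZMod (n+1))).val + 1 ≤ k)
          = (univ.filter fun i => ((G.1.1 i).2 : ℕ) + 1 ≤ k) := by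
        apply Finset.filter_congr
        intro i _
        rw [e i]
      rw [show (Finset.univ.filter fun i =>
          (((fun x => ((G.1.1 x).1, ((((G.1.1 x).2 : ℕ)) : ZMod (n+1)))) i).2).val + 1 ≤ k)
        = (univ.filter fun i => ((G.1.1 i).2 : ℕ) + 1 ≤ k) from e2]
      exact h
  left_inv := by
    rintro ⟨⟨g, hg⟩, hpk⟩
    apply Subtype.ext
    apply Subtype.ext
    funext x
    refine Prod.ext rfl ?_
    show ((((g x).2.val : ℕ)) : ZMod (n+1)) = (g x).2
    rw [ZMod.natCast_val, ZMod.cast_id]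
  right_inv := by
    rintro ⟨⟨g, hg⟩, hpk⟩
    apply Subtype.ext
    apply Subtype.ext
    funext x
    refine Prod.ext rfl ?_
    apply Fin.ext
    show ((((g x).2 : ℕ) : ZMod (n+1))).val = ((g x).2 : ℕ)
    exact ZMod.val_cast_of_lt (by have := ((g x).2).2; omega)

/-- The equivalence between the pairs counted by `aCount` and parking `DSet` structures. -/
def claimA_equiv :
    ((f : {f : Fin n → Fin n // IsParkingFunction n f}) ×
      {P : Finpartition (Finset.univ : Finset (Fin n)) //
        ∀ b ∈ P.parts, ∃ c : Fin n, ∀ x ∈ b, f.1 x = c})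
    ≃ {g : DSet (Fin n) (Fin n) // IsParkingFunction n (fun i => (g.1 i).2)} := by
  classical
  -- helper: the min of the part containing x
  let minp : Finpartition (Finset.univ : Finset (Fin n)) → Fin n → Fin n := fun P x =>
    (P.part x).min' ⟨x, P.mem_part (Finset.mem_univ x)⟩
  have minp_mem : ∀ (P : Finpartition (Finset.univ : Finset (Fin n))) (x : Fin n),
      minp P x ∈ P.part x := fun P x => Finset.min'_mem _ _
  have minp_le : ∀ (P : Finpartition (Finset.univ : Finset (Fin n))) (x : Fin n),
      minp P x ≤ x := fun P x =>
    Finset.min'_le _ _ (P.mem_part (Finset.mem_univ x))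
  have part_minp : ∀ (P : Finpartition (Finset.univ : Finset (Fin n))) (x : Fin n),
      P.part (minp P x) = P.part x := fun P x =>
    P.part_eq_of_mem (P.part_mem.2 (Finset.mem_univ x)) (minp_mem P x)
  have minp_idem : ∀ (P : Finpartition (Finset.univ : Finset (Fin n))) (x : Fin n),
      minp P (minp P x) = minp P x := by
    intro P x
    show (P.part (minp P x)).min' _ = _
    congr 1
    exact part_minp P x
  -- setoid from a DSet structure
  let sk : (Fin n → Fin n × Fin n) → Setoid (Fin n) := fun g => Setoid.ker (fun x => (g x).1)
  letI : ∀ g, DecidableRel (sk g).r := fun g a b => decidable_of_iff ((g a).1 = (g b).1) Iff.rfl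
  refine
  { toFun := fun G => ⟨⟨fun x => (minp G.2.1 x, G.1.1 x), ?_⟩, ?_⟩,
    invFun := fun G => ⟨⟨fun x => (G.1.1 x).2, ?_⟩,
      ⟨Finpartition.ofSetoid (sk G.1.1), ?_⟩⟩,
    left_inv := ?_, right_inv := ?_ }
  · -- DSet property of toFun
    intro x
    obtain ⟨⟨f, hf⟩, ⟨P, hP⟩⟩ := G
    refine ⟨minp_le P x, ?_⟩
    simp only
    refine Prod.ext (minp_idem P x) ?_
    obtain ⟨c, hc⟩ := hP (P.part x) (P.part_mem.2 (Finset.mem_univ x))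
    show f (minp P x) = f x
    exact (hc _ (minp_mem P x)).trans (hc _ (P.mem_part (Finset.mem_univ x))).symm
  · -- parking property of toFun
    exact G.1.2
  · -- parking property of invFun
    exact G.2
  · -- blocks are f-constant
    intro b hb
    obtain ⟨a, ha⟩ := Finpartition.nonempty_of_mem_parts _ hb
    have hpart := Finpartition.part_eq_of_mem _ hb ha
    refine ⟨(G.1.1 a).2, ?_⟩
    intro x hx
    rw [← hpart] at hx
    have hrel : (G.1.1 a).1 = (G.1.1 x).1 := Finpartition.mem_part_ofSetoid_iff_rel.1 hx
    show (G.1.1 x).2 = (G.1.1 a).2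
    have h2x := congrArg Prod.snd (G.1.2 x).2
    have h2a := congrArg Prod.snd (G.1.2 a).2
    rw [← h2x, ← h2a, hrel]
  · -- left inverse
    rintro ⟨⟨f, hf⟩, ⟨P, hP⟩⟩
    have part_eq : ∀ a, (Finpartition.ofSetoid
        (sk (fun x => (minp P x, f x)))).part a = P.part a := by
      intro a
      apply Finset.ext
      intro x
      rw [Finpartition.mem_part_ofSetoid_iff_rel]
      show minp P a = minp P x ↔ _
      constructor
      · intro h
        have : P.part a = P.part x := by
          rw [← part_minp P a, ← part_minp P x, h]
        exact (P.mem_part_iff_part_eq_part (Finset.mem_univ x) (Finset.mem_univ a)).2 this.symm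
      · intro hx
        have : P.part x = P.part a :=
          (P.mem_part_iff_part_eq_part (Finset.mem_univ x) (Finset.mem_univ a)).1 hx
        show (P.part a).min' _ = (P.part x).min' _
        congr 1
        exact this.symm
    have hPeq : Finpartition.ofSetoid (sk (fun x => (minp P x, f x))) = P := by
      apply Finpartition.ext
      ext b
      constructor
      · intro hb
        obtain ⟨a, ha⟩ := Finpartition.nonempty_of_mem_parts _ hb
        have := Finpartition.part_eq_of_mem _ hb ha
        rw [← this, part_eq]
        exact P.part_mem.2 (Finset.mem_univ a)
      · intro hb
        obtain ⟨a, ha⟩ := P.nonempty_of_mem_parts hb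
        have := P.part_eq_of_mem hb ha
        rw [← this, ← part_eq]
        exact (Finpartition.part_mem _).2 (Finset.mem_univ a)
    exact Sigma.ext rfl (heq_of_eq (Subtype.ext hPeq))
  · -- right inverse
    rintro ⟨⟨g, hg⟩, hpk⟩
    apply Subtype.ext
    apply Subtype.ext
    funext x
    refine Prod.ext ?_ rfl
    refine le_antisymm (Finset.min'_le _ _ ?_) (Finset.le_min' _ ⟨x, Finpartition.mem_part _ (Finset.mem_univ x)⟩ _ ?_)
    · refine Finpartition.mem_part_ofSetoid_iff_rel.2 ?_
      show (g x).1 = (g ((g x).1)).1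
      exact (congrArg Prod.fst (hg x).2).symm
    · intro y hy
      have hr : (g x).1 = (g y).1 := Finpartition.mem_part_ofSetoid_iff_rel.1 hy
      rw [hr]
      exact (hg y).1

end Bridge

namespace SC

local notation "cf" => PowerSeries.coeff (R := ℚ)
local notation "d" => PowerSeries.derivative (R := ℚ)

lemma coeff_pow_eq_zero {g : ℚ⟦X⟧} (hg : constantCoeff (R := ℚ) g = 0) {n k : ℕ} (h : n < k) :
    cf n (g ^ k) = 0 := by
  have hdvd : (X : ℚ⟦X⟧) ^ k ∣ g ^ k := pow_dvd_pow_of_dvd (X_dvd_iff.2 hg) k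
  exact (X_pow_dvd_iff.1 hdvd) n h

lemma coeff_seriesComp (F g : ℚ⟦X⟧) (n : ℕ) :
    cf n (seriesComp F g) = ∑ k ∈ range (n + 1), cf k F * cf n (g ^ k) := by
  simp [seriesComp, smul_eq_C_mul, map_sum]

lemma coeff_seriesComp_of_le {g : ℚ⟦X⟧} (hg : constantCoeff (R := ℚ) g = 0) (F : ℚ⟦X⟧) {n N : ℕ}
    (hN : n + 1 ≤ N) :
    cf n (seriesComp F g) = ∑ k ∈ range N, cf k F * cf n (g ^ k) := by
  rw [coeff_seriesComp]
  apply Finset.sum_subset (Finset.range_subset_range.2 hN)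
  intro k _ hk
  rw [Finset.mem_range, not_lt] at hk
  rw [coeff_pow_eq_zero hg (by omega), mul_zero]

lemma seriesComp_one (g : ℚ⟦X⟧) : seriesComp 1 g = 1 := by
  ext n
  rw [coeff_seriesComp]
  rw [Finset.sum_eq_single 0]
  · simp
  · intro k _ hk; simp [PowerSeries.coeff_one, hk]
  · simp

lemma seriesComp_sub (F G g : ℚ⟦X⟧) :
    seriesComp (F - G) g = seriesComp F g - seriesComp G g := by
  ext n
  simp only [coeff_seriesComp, map_sub, sub_mul, Finset.sum_sub_distrib]

lemma agree_mul {N : ℕ} {f₁ f₂ g₁ g₂ : ℚ⟦X⟧} (hf : ∀ i ≤ N, cf i f₁ = cf i f₂)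
    (hg : ∀ i ≤ N, cf i g₁ = cf i g₂) : ∀ i ≤ N, cf i (f₁ * g₁) = cf i (f₂ * g₂) := by
  intro i hi
  rw [coeff_mul, coeff_mul]
  apply Finset.sum_congr rfl
  intro p hp
  rw [Finset.HasAntidiagonal.mem_antidiagonal] at hp
  rw [hf p.1 (by omega), hg p.2 (by omega)]

lemma agree_pow {N : ℕ} {g₁ g₂ : ℚ⟦X⟧} (hg : ∀ i ≤ N, cf i g₁ = cf i g₂) (k : ℕ) :
    ∀ i ≤ N, cf i (g₁ ^ k) = cf i (g₂ ^ k) := by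
  induction k with
  | zero => intro i _; rfl
  | succ k ih =>
      intro i hi
      rw [pow_succ, pow_succ]
      exact agree_mul ih hg i hi

lemma sum_range_antidiag {M : Type*} [AddCommMonoid M] (N : ℕ) (H : ℕ × ℕ → M) :
    ∑ k ∈ range N, ∑ p ∈ antidiagonal k, H p
      = ∑ p ∈ (range N ×ˢ range N).filter (fun p => p.1 + p.2 < N), H p := by
  have h1 : ∀ k ∈ range N, ∑ p ∈ antidiagonal k, H p
      = ∑ p ∈ ((range N ×ˢ range N).filter (fun p => p.1 + p.2 < N)).filter
          (fun p => p.1 + p.2 = k), H p := by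
    intro k hk
    rw [Finset.mem_range] at hk
    apply Finset.sum_congr _ (fun _ _ => rfl)
    ext p
    simp only [Finset.HasAntidiagonal.mem_antidiagonal, Finset.mem_filter, Finset.mem_product, Finset.mem_range]
    constructor
    · rintro rfl; exact ⟨⟨⟨by omega, by omega⟩, by omega⟩, rfl⟩
    · rintro ⟨_, h⟩; exact h
  rw [Finset.sum_congr rfl h1]
  exact Finset.sum_fiberwise_of_maps_to
    (fun p hp => by simp only [Finset.mem_filter] at hp; exact Finset.mem_range.2 hp.2) H

lemma seriesComp_mul {g : ℚ⟦X⟧} (hg : constantCoeff (R := ℚ) g = 0) (F₁ F₂ : ℚ⟦X⟧) :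
    seriesComp (F₁ * F₂) g = seriesComp F₁ g * seriesComp F₂ g := by
  ext n
  rw [coeff_seriesComp_of_le hg _ (show n + 1 ≤ 2 * n + 2 by omega)]
  have lhs1 : ∑ k ∈ range (2 * n + 2), cf k (F₁ * F₂) * cf n (g ^ k)
      = ∑ k ∈ range (2 * n + 2), ∑ p ∈ antidiagonal k,
          cf p.1 F₁ * cf p.2 F₂ * cf n (g ^ (p.1 + p.2)) := by
    apply Finset.sum_congr rfl
    intro k hk
    rw [coeff_mul, Finset.sum_mul]
    apply Finset.sum_congr rfl
    intro p hp
    rw [Finset.HasAntidiagonal.mem_antidiagonal] at hp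
    rw [hp]
  rw [lhs1, sum_range_antidiag]
  have shrink : ∑ p ∈ ((range (2*n+2)) ×ˢ (range (2*n+2))).filter (fun p => p.1 + p.2 < 2*n+2),
        cf p.1 F₁ * cf p.2 F₂ * cf n (g ^ (p.1 + p.2))
      = ∑ p ∈ (range (n+1)) ×ˢ (range (n+1)),
        cf p.1 F₁ * cf p.2 F₂ * cf n (g ^ (p.1 + p.2)) := by
    refine (Finset.sum_subset ?_ ?_).symm
    · intro p hp
      simp only [Finset.mem_product, Finset.mem_range] at hp
      simp only [Finset.mem_filter, Finset.mem_product, Finset.mem_range]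
      exact ⟨⟨by omega, by omega⟩, by omega⟩
    · intro p hp hp2
      simp only [Finset.mem_filter, Finset.mem_product, Finset.mem_range] at hp
      simp only [Finset.mem_product, Finset.mem_range] at hp2
      have : n < p.1 + p.2 := by omega
      rw [coeff_pow_eq_zero hg this, mul_zero]
  rw [shrink]
  rw [coeff_mul]
  have rhs1 : ∑ p ∈ antidiagonal n, cf p.1 (seriesComp F₁ g) * cf p.2 (seriesComp F₂ g)
      = ∑ p ∈ antidiagonal n, ∑ q ∈ (range (n+1)) ×ˢ (range (n+1)),
          cf q.1 F₁ * cf q.2 F₂ * (cf p.1 (g ^ q.1) * cf p.2 (g ^ q.2)) := by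
    apply Finset.sum_congr rfl
    intro p hp
    rw [Finset.HasAntidiagonal.mem_antidiagonal] at hp
    rw [coeff_seriesComp_of_le hg F₁ (show p.1 + 1 ≤ n + 1 by omega),
        coeff_seriesComp_of_le hg F₂ (show p.2 + 1 ≤ n + 1 by omega),
        Finset.sum_mul_sum, Finset.sum_product]
    apply Finset.sum_congr rfl; intro i _
    apply Finset.sum_congr rfl; intro j _
    ring
  rw [rhs1, Finset.sum_comm]
  apply Finset.sum_congr rfl
  intro q _
  rw [pow_add, coeff_mul, Finset.mul_sum]

lemma seriesComp_pow {g : ℚ⟦X⟧} (hg : constantCoeff (R := ℚ) g = 0) (F : ℚ⟦X⟧) (m : ℕ) :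
    seriesComp (F ^ m) g = (seriesComp F g) ^ m := by
  induction m with
  | zero => simpa using seriesComp_one g
  | succ m ih => rw [pow_succ, pow_succ, seriesComp_mul hg, ih]

lemma constantCoeff_seriesComp (F g : ℚ⟦X⟧) :
    constantCoeff (R := ℚ) (seriesComp F g) = constantCoeff (R := ℚ) F := by
  rw [← PowerSeries.coeff_zero_eq_constantCoeff_apply,
      ← PowerSeries.coeff_zero_eq_constantCoeff_apply, coeff_seriesComp]
  simp

lemma seriesComp_assoc {G h : ℚ⟦X⟧} (hG : constantCoeff (R := ℚ) G = 0)
    (hh : constantCoeff (R := ℚ) h = 0) (F : ℚ⟦X⟧) :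
    seriesComp F (seriesComp G h) = seriesComp (seriesComp F G) h := by
  have hGh : constantCoeff (R := ℚ) (seriesComp G h) = 0 := by
    rw [constantCoeff_seriesComp, hG]
  ext n
  rw [coeff_seriesComp, coeff_seriesComp]
  have lhs1 : ∀ k, cf n ((seriesComp G h) ^ k) = ∑ j ∈ range (n+1), cf j (G ^ k) * cf n (h ^ j) := by
    intro k
    rw [← seriesComp_pow hh, coeff_seriesComp]
  simp_rw [lhs1]
  have rhs1 : ∀ j ∈ range (n+1), cf j (seriesComp F G) * cf n (h ^ j)
      = ∑ k ∈ range (n+1), cf k F * cf j (G ^ k) * cf n (h ^ j) := by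
    intro j hj
    rw [Finset.mem_range] at hj
    rw [coeff_seriesComp_of_le hG F (show j + 1 ≤ n + 1 by omega), Finset.sum_mul]
  rw [Finset.sum_congr rfl rhs1, Finset.sum_comm]
  apply Finset.sum_congr rfl
  intro k _
  rw [Finset.mul_sum]
  apply Finset.sum_congr rfl
  intro j _
  ring

lemma derivative_seriesComp {g : ℚ⟦X⟧} (hg : constantCoeff (R := ℚ) g = 0) (F : ℚ⟦X⟧) :
    d (seriesComp F g) = seriesComp (d F) g * d g := by
  ext n
  rw [PowerSeries.coeff_derivative, coeff_seriesComp, coeff_mul]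
  have rhs1 : ∀ p ∈ antidiagonal n, cf p.1 (seriesComp (d F) g) * cf p.2 (d g)
      = ∑ k ∈ range (n+1), cf k (d F) * cf p.1 (g ^ k) * cf p.2 (d g) := by
    intro p hp
    rw [Finset.HasAntidiagonal.mem_antidiagonal] at hp
    rw [coeff_seriesComp_of_le hg (d F) (show p.1 + 1 ≤ n + 1 by omega), Finset.sum_mul]
  rw [Finset.sum_congr rfl rhs1, Finset.sum_comm]
  have rhs2 : ∀ k ∈ range (n+1), ∑ p ∈ antidiagonal n, cf k (d F) * cf p.1 (g ^ k) * cf p.2 (d g)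
      = cf k (d F) * cf n (g ^ k * d g) := by
    intro k _
    rw [coeff_mul, Finset.mul_sum]
    apply Finset.sum_congr rfl
    intro p _; ring
  rw [Finset.sum_congr rfl rhs2]
  have keypow : ∀ k : ℕ, (k+1:ℚ) * cf n (g ^ k * d g) = cf (n+1) (g ^ (k+1)) * (n+1:ℚ) := by
    intro k
    have hd := (PowerSeries.derivative (R := ℚ)).leibniz_pow g (k+1)
    have hc := congrArg (cf n) hd
    rw [Nat.add_sub_cancel, smul_eq_mul (α := ℚ⟦X⟧), map_nsmul, nsmul_eq_mul,
      PowerSeries.coeff_derivative] at hc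
    push_cast at hc
    linarith [hc]
  rw [Finset.sum_mul, Finset.sum_range_succ' (fun k => cf k F * cf (n+1) (g ^ k) * ((n:ℚ)+1)) (n+1)]
  have zero0 : cf 0 F * cf (n+1) (g ^ 0) * ((n:ℚ)+1) = 0 := by
    simp [PowerSeries.coeff_one]
  rw [zero0, add_zero]
  apply Finset.sum_congr rfl
  intro k _
  rw [PowerSeries.coeff_derivative]
  have h := keypow k
  first
  | linear_combination (cf (k+1) F) * h
  | linear_combination (-(cf (k+1) F)) * h

-- continuation: exp facts, fixed point Ysol, Lagrange inversion

lemma coeff_exp' (n : ℕ) : cf n (PowerSeries.exp ℚ) = 1 / n.factorial := by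
  rw [PowerSeries.coeff_exp]; simp

lemma constCoeff_exp_sub_one : constantCoeff (R := ℚ) (PowerSeries.exp ℚ - 1) = 0 := by
  simp [PowerSeries.constantCoeff_exp]

lemma derivative_exp' : d (PowerSeries.exp ℚ) = PowerSeries.exp ℚ := by
  ext n
  rw [PowerSeries.coeff_derivative, coeff_exp', coeff_exp', Nat.factorial_succ]
  have h1 : (n.factorial : ℚ) ≠ 0 := Nat.cast_ne_zero.2 n.factorial_ne_zero
  field_simp
  push_cast
  ring

/-- `E = exp(exp(t) - 1)`, the Bell-number EGF. -/
def Edef : ℚ⟦X⟧ := seriesComp (PowerSeries.exp ℚ) (PowerSeries.exp ℚ - 1)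

lemma constantCoeff_Edef : constantCoeff (R := ℚ) Edef = 1 := by
  rw [Edef, constantCoeff_seriesComp, PowerSeries.constantCoeff_exp]

lemma derivative_Edef : d Edef = Edef * PowerSeries.exp ℚ := by
  rw [Edef, derivative_seriesComp constCoeff_exp_sub_one, derivative_exp']
  congr 1
  rw [map_sub, derivative_exp']
  have : d (1 : ℚ⟦X⟧) = 0 := by
    simpa using (PowerSeries.derivative (R := ℚ)).map_one_eq_zero
  rw [this, sub_zero]

/-- iterates approximating the solution of `Y = X * E(Y)` -/
def yApprox (E : ℚ⟦X⟧) : ℕ → ℚ⟦X⟧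
  | 0 => 0
  | (m+1) => X * seriesComp E (yApprox E m)

lemma constantCoeff_yApprox (E : ℚ⟦X⟧) (m : ℕ) : constantCoeff (R := ℚ) (yApprox E m) = 0 := by
  cases m with
  | zero => simp [yApprox]
  | succ m => simp [yApprox]

lemma yApprox_agree (E : ℚ⟦X⟧) : ∀ m, ∀ i ≤ m, cf i (yApprox E (m+1)) = cf i (yApprox E m) := by
  intro m
  induction m with
  | zero =>
      intro i hi
      interval_cases i
      rw [PowerSeries.coeff_zero_eq_constantCoeff_apply,
        PowerSeries.coeff_zero_eq_constantCoeff_apply, constantCoeff_yApprox,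
        constantCoeff_yApprox]
  | succ m ih =>
      intro i hi
      match i with
      | 0 =>
        rw [PowerSeries.coeff_zero_eq_constantCoeff_apply,
          PowerSeries.coeff_zero_eq_constantCoeff_apply, constantCoeff_yApprox,
          constantCoeff_yApprox]
      | (j+1) =>
        show cf (j+1) (X * seriesComp E (yApprox E (m+1))) = cf (j+1) (X * seriesComp E (yApprox E m))
        rw [PowerSeries.coeff_succ_X_mul, PowerSeries.coeff_succ_X_mul,
          coeff_seriesComp, coeff_seriesComp]
        apply Finset.sum_congr rfl
        intro k _
        rw [agree_pow (N := m) ih k j (by omega)]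

def Ysol (E : ℚ⟦X⟧) : ℚ⟦X⟧ := PowerSeries.mk fun i => cf i (yApprox E i)

lemma coeff_Ysol (E : ℚ⟦X⟧) : ∀ m i, i ≤ m → cf i (Ysol E) = cf i (yApprox E m) := by
  intro m
  induction m with
  | zero =>
      intro i hi
      interval_cases i
      simp [Ysol]
  | succ m ih =>
      intro i hi
      rcases Nat.lt_or_ge i (m+1) with h | h
      · rw [ih i (by omega), ← yApprox_agree E m i (by omega)]
      · have : i = m + 1 := by omega
        subst this
        simp [Ysol, PowerSeries.coeff_mk]

lemma constantCoeff_Ysol (E : ℚ⟦X⟧) : constantCoeff (R := ℚ) (Ysol E) = 0 := by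
  rw [← PowerSeries.coeff_zero_eq_constantCoeff_apply, coeff_Ysol E 0 0 le_rfl,
    PowerSeries.coeff_zero_eq_constantCoeff_apply, constantCoeff_yApprox]

lemma Ysol_spec (E : ℚ⟦X⟧) : Ysol E = X * seriesComp E (Ysol E) := by
  ext n
  match n with
  | 0 =>
    rw [PowerSeries.coeff_zero_eq_constantCoeff_apply,
      PowerSeries.coeff_zero_eq_constantCoeff_apply, constantCoeff_Ysol]
    simp
  | (j+1) =>
    rw [coeff_Ysol E (j+1) (j+1) le_rfl]
    show cf (j+1) (X * seriesComp E (yApprox E j)) = _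
    rw [PowerSeries.coeff_succ_X_mul, PowerSeries.coeff_succ_X_mul,
      coeff_seriesComp, coeff_seriesComp]
    apply Finset.sum_congr rfl
    intro k _
    rw [agree_pow (N := j) (fun i hi => (coeff_Ysol E j i hi).symm) k j le_rfl]

section Lagrange

variable {U : ℚ⟦X⟧} (hU : constantCoeff (R := ℚ) U ≠ 0)

lemma dXU (U : ℚ⟦X⟧) : d (X * U) = U + X * d U := by
  rw [Derivation.leibniz]
  simp only [smul_eq_mul, PowerSeries.derivative_X, mul_one]
  ring

lemma coeff_comp_mul (B C Y : ℚ⟦X⟧) (hY : constantCoeff (R := ℚ) Y = 0) (r : ℕ) :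
    cf r (seriesComp B Y * C) = ∑ j ∈ range (r+1), cf j B * cf r (Y^j * C) := by
  rw [coeff_mul]
  have h1 : ∀ p ∈ antidiagonal r, cf p.1 (seriesComp B Y) * cf p.2 C
      = ∑ j ∈ range (r+1), cf j B * (cf p.1 (Y^j) * cf p.2 C) := by
    intro p hp
    rw [Finset.HasAntidiagonal.mem_antidiagonal] at hp
    rw [coeff_seriesComp_of_le hY B (show p.1 + 1 ≤ r + 1 by omega), Finset.sum_mul]
    apply Finset.sum_congr rfl
    intro j _; ring
  rw [Finset.sum_congr rfl h1, Finset.sum_comm]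
  apply Finset.sum_congr rfl
  intro j _
  rw [coeff_mul, Finset.mul_sum]

include hU

lemma UIone : U * U⁻¹ = 1 := PowerSeries.mul_inv_cancel U hU

lemma key_coeff_dU (m : ℕ) : cf m ((U⁻¹)^(m+2) * d U) = -(cf (m+1) ((U⁻¹)^(m+1))) := by
  have hd := (PowerSeries.derivative (R := ℚ)).leibniz_pow (U⁻¹) (m+1)
  rw [Nat.add_sub_cancel, PowerSeries.derivative_inv', smul_eq_mul (α := ℚ⟦X⟧)] at hd
  have hc := congrArg (cf m) hd
  rw [PowerSeries.coeff_derivative, map_nsmul, nsmul_eq_mul] at hc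
  have e1 : (U⁻¹)^m * (-(U⁻¹)^2 * d U) = -((U⁻¹)^(m+2) * d U) := by ring
  rw [e1] at hc
  have hm1 : ((m:ℚ)+1) ≠ 0 := by positivity
  push_cast at hc
  simp only [map_neg] at hc
  refine mul_left_cancel₀ hm1 ?_
  linear_combination hc

lemma key0 (m : ℕ) : cf (m+1) ((U⁻¹)^(m+2) * d (X * U)) = 0 := by
  have e1 : (U⁻¹)^(m+2) * (U + X * d U) = (U⁻¹)^(m+1) + X * ((U⁻¹)^(m+2) * d U) := by
    have e2 : (U⁻¹)^(m+2) * U = (U⁻¹)^(m+1) := by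
      rw [pow_succ]
      rw [mul_assoc, PowerSeries.inv_mul_cancel U hU, mul_one]
    calc (U⁻¹)^(m+2) * (U + X * d U)
        = (U⁻¹)^(m+2) * U + X * ((U⁻¹)^(m+2) * d U) := by ring
      _ = (U⁻¹)^(m+1) + X * ((U⁻¹)^(m+2) * d U) := by rw [e2]
  rw [dXU, e1, map_add, PowerSeries.coeff_succ_X_mul, key_coeff_dU hU]
  ring

lemma key1 : cf 0 (U⁻¹ * d (X * U)) = 1 := by
  have e1 : U⁻¹ * (U + X * d U) = 1 + X * (U⁻¹ * d U) := by
    have : U⁻¹ * U = 1 := PowerSeries.inv_mul_cancel U hU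
    calc U⁻¹ * (U + X * d U) = U⁻¹ * U + X * (U⁻¹ * d U) := by ring
      _ = 1 + X * (U⁻¹ * d U) := by rw [this]
  rw [dXU, e1, PowerSeries.coeff_zero_eq_constantCoeff_apply]
  simp

lemma res_formula (B : ℚ⟦X⟧) (r : ℕ) :
    cf r B = cf r (seriesComp B (X * U) * ((U⁻¹)^(r+1) * d (X * U))) := by
  have hY0 : constantCoeff (R := ℚ) (X * U) = 0 := by simp
  rw [coeff_comp_mul _ _ _ hY0]
  have term : ∀ j ∈ range (r+1),
      cf j B * cf r ((X*U)^j * ((U⁻¹)^(r+1) * d (X * U)))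
        = cf j B * (if j = r then 1 else 0) := by
    intro j hj
    rw [Finset.mem_range] at hj
    congr 1
    have e1 : (X*U)^j * ((U⁻¹)^(r+1) * d (X * U))
        = X^j * ((U⁻¹)^(r+1-j) * d (X * U)) := by
      have e2 : (U:ℚ⟦X⟧)^j * (U⁻¹)^(r+1) = (U⁻¹)^(r+1-j) := by
        have : (U⁻¹)^(r+1) = (U⁻¹)^(r+1-j) * (U⁻¹)^j := by
          rw [← pow_add]
          congr 1
          omega
        rw [this, ← mul_assoc, mul_comm ((U:ℚ⟦X⟧)^j), mul_assoc, ← mul_pow,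
          UIone hU, one_pow, mul_one]
      calc (X*U)^j * ((U⁻¹)^(r+1) * d (X * U))
          = X^j * ((U^j * (U⁻¹)^(r+1)) * d (X * U)) := by rw [mul_pow]; ring
        _ = X^j * ((U⁻¹)^(r+1-j) * d (X * U)) := by rw [e2]
    rw [e1]
    obtain ⟨q, hq⟩ : ∃ q, r = q + j := ⟨r - j, by omega⟩
    subst hq
    have hexp : q + j + 1 - j = q + 1 := by omega
    rw [hexp, PowerSeries.coeff_X_pow_mul]
    match q with
    | 0 =>
      rw [if_pos (by omega), pow_one]
      exact key1 hU
    | (q'+1) =>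
      rw [if_neg (by omega)]
      exact key0 hU q'
  rw [Finset.sum_congr rfl term]
  simp_rw [mul_ite, mul_one, mul_zero]
  rw [Finset.sum_ite_eq' (range (r+1)) r (fun j => cf j B)]
  simp

end Lagrange

theorem lagrange_main (E : ℚ⟦X⟧) (hE : constantCoeff (R := ℚ) E = 1) (n : ℕ) :
    ((n:ℚ)+1) * cf (n+1) (Ysol E) = cf n (E^(n+1)) := by
  set U := seriesComp E (Ysol E) with hUdef
  have hU : constantCoeff (R := ℚ) U ≠ 0 := by
    rw [hUdef, constantCoeff_seriesComp, hE]; norm_num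
  have hXU : X * U = Ysol E := (Ysol_spec E).symm
  have h1 := res_formula hU (E^(n+1)) n
  rw [hXU] at h1
  have h2 : seriesComp (E^(n+1)) (Ysol E) = U^(n+1) :=
    seriesComp_pow (constantCoeff_Ysol E) E (n+1)
  rw [h2] at h1
  have h3 : (U:ℚ⟦X⟧)^(n+1) * ((U⁻¹)^(n+1) * d (X * U)) = d (X * U) := by
    rw [← mul_assoc, ← mul_pow, UIone hU, one_pow, one_mul]
  rw [hXU] at h3
  rw [h3] at h1
  rw [h1, PowerSeries.coeff_derivative]
  ring

theorem lagrange_glue (E : ℚ⟦X⟧) (hE : constantCoeff (R := ℚ) E = 1) (A : ℚ⟦X⟧)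
    (hA : ∀ n : ℕ, ((n:ℚ)+1) * cf n A = cf n (E^(n+1))) :
    A = seriesComp E (X * A) := by
  have hXA : X * A = Ysol E := by
    ext n
    match n with
    | 0 =>
      rw [PowerSeries.coeff_zero_eq_constantCoeff_apply,
        PowerSeries.coeff_zero_eq_constantCoeff_apply, constantCoeff_Ysol]
      simp
    | (m+1) =>
      rw [PowerSeries.coeff_succ_X_mul]
      have h1 := hA m
      have h2 := lagrange_main E hE m
      have hm1 : ((m:ℚ)+1) ≠ 0 := by positivity
      have h3 : ((m:ℚ)+1) * cf m A = ((m:ℚ)+1) * cf (m+1) (Ysol E) := by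
        rw [h1, h2]
      exact mul_left_cancel₀ hm1 h3
  have := Ysol_spec E
  rw [← hXA] at this
  have hX : (X : ℚ⟦X⟧) ≠ 0 := PowerSeries.X_ne_zero
  exact mul_left_cancel₀ hX this

theorem final_form (W : ℚ⟦X⟧) (hW : constantCoeff (R := ℚ) W = 0) :
    seriesComp (PowerSeries.exp ℚ) (seriesComp (PowerSeries.exp ℚ) W - 1)
      = seriesComp Edef W := by
  have h1 : seriesComp (PowerSeries.exp ℚ) W - 1 = seriesComp (PowerSeries.exp ℚ - 1) W := by
    rw [seriesComp_sub, seriesComp_one]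
  rw [h1, seriesComp_assoc constCoeff_exp_sub_one hW, Edef]

end SC
-- ======== final assembly ========

def zmodFinEquiv (m : ℕ) : ZMod (m+1) ≃ Fin (m+1) where
  toFun z := ⟨z.val, ZMod.val_lt z⟩
  invFun i := ((i : ℕ) : ZMod (m+1))
  left_inv z := by
    show (((z.val : ℕ)) : ZMod (m+1)) = z
    rw [ZMod.natCast_val, ZMod.cast_id]
  right_inv i := by
    apply Fin.ext
    show ((((i:ℕ)) : ZMod (m+1))).val = (i : ℕ)
    exact ZMod.val_cast_of_lt i.2

lemma key_count (n : ℕ) : (n+1) * aCount n = Fc (n+1) n := by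
  have e1 : aCount n
      = Nat.card {g : DSet (Fin n) (Fin n) // IsParkingFunction n (fun i => (g.1 i).2)} :=
    Nat.card_congr claimA_equiv
  have e2 : Nat.card {g : DSet (Fin n) (Fin n) // IsParkingFunction n (fun i => (g.1 i).2)}
      = Nat.card {g : DSet (Fin n) (ZMod (n+1)) // pkZ n (fun i => (g.1 i).2)} :=
    (Nat.card_congr pkEquiv).symm
  have e3 := pollak_card (n := n)
  have e4 : Nat.card (DSet (Fin n) (ZMod (n+1))) = Fc (n+1) n := by
    rw [Fc]
    exact Nat.card_congr (DSet.congrColor (zmodFinEquiv n))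
  rw [e1, e2, ← e3, e4]

namespace SC

local notation "cf" => PowerSeries.coeff (R := ℚ)

lemma Grec (c n : ℕ) :
    ((n:ℚ)+1) * cf (n+1) (Edef ^ c)
      = (c:ℚ) * ∑ p ∈ Finset.HasAntidiagonal.antidiagonal n,
          cf p.1 (Edef ^ c) * cf p.2 (PowerSeries.exp ℚ) := by
  cases c with
  | zero =>
      simp [PowerSeries.coeff_one]
  | succ c =>
      have hd := (PowerSeries.derivative (R := ℚ)).leibniz_pow Edef (c+1)
      rw [Nat.add_sub_cancel, smul_eq_mul (α := ℚ⟦X⟧), derivative_Edef] at hd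
      have hc := congrArg (cf n) hd
      rw [PowerSeries.coeff_derivative, map_nsmul, nsmul_eq_mul] at hc
      have e1 : Edef ^ c * (Edef * PowerSeries.exp ℚ) = Edef ^ (c+1) * PowerSeries.exp ℚ := by
        rw [pow_succ]; ring
      rw [e1, PowerSeries.coeff_mul] at hc
      push_cast at hc ⊢
      linear_combination hc

lemma claimC (n : ℕ) : ∀ c : ℕ, (Fc c n : ℚ) = (n.factorial : ℚ) * cf n (Edef ^ c) := by
  induction n using Nat.strong_induction_on with
  | _ n ih =>
    match n with
    | 0 =>
      intro c
      rw [Fc_zero]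
      rw [PowerSeries.coeff_zero_eq_constantCoeff_apply, map_pow, constantCoeff_Edef]
      simp
    | (m+1) =>
      intro c
      have hg := Grec c m
      have hfact : (((m+1).factorial : ℕ) : ℚ) = ((m:ℚ)+1) * (m.factorial : ℚ) := by
        rw [Nat.factorial_succ]
        push_cast
        ring
      have hsum : ∑ p ∈ Finset.HasAntidiagonal.antidiagonal m, cf p.1 (Edef^c) * cf p.2 (PowerSeries.exp ℚ)
          = ∑ j ∈ Finset.range (m+1), cf j (Edef^c) * (1/(((m-j).factorial : ℕ) : ℚ)) := by
        rw [Finset.Nat.sum_antidiagonal_eq_sum_range_succ_mk]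
        apply Finset.sum_congr rfl
        intro j _
        rw [coeff_exp']
      have h0 : (Fc c (m+1) : ℚ)
          = (c:ℚ) * ∑ j ∈ Finset.range (m+1), ((m.choose j : ℕ) : ℚ) * (Fc c j : ℚ) := by
        exact_mod_cast Fc_succ c m
      calc (Fc c (m+1) : ℚ)
          = (c:ℚ) * ∑ j ∈ Finset.range (m+1),
              ((m.choose j : ℕ) : ℚ) * ((j.factorial : ℚ) * cf j (Edef^c)) := by
            rw [h0]
            congr 1
            apply Finset.sum_congr rfl
            intro j hj
            rw [ih j (by rw [Finset.mem_range] at hj; omega) c]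
        _ = (c:ℚ) * ∑ j ∈ Finset.range (m+1),
              (m.factorial : ℚ) * (cf j (Edef^c) * (1/(((m-j).factorial : ℕ) : ℚ))) := by
            congr 1
            apply Finset.sum_congr rfl
            intro j hj
            rw [Finset.mem_range] at hj
            have hle : j ≤ m := by omega
            have hcf := Nat.choose_mul_factorial_mul_factorial hle
            have hne : (((m-j).factorial : ℕ) : ℚ) ≠ 0 :=
              Nat.cast_ne_zero.2 (Nat.factorial_ne_zero _)
            have hsc : ((m.choose j : ℕ) : ℚ) * (j.factorial : ℚ)
                = (m.factorial : ℚ) / (((m-j).factorial : ℕ) : ℚ) := by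
              rw [eq_div_iff hne]
              exact_mod_cast hcf
            field_simp at hsc ⊢
            linear_combination cf j (Edef ^ c) * hsc
        _ = (m.factorial : ℚ) * ((c:ℚ) * ∑ p ∈ Finset.HasAntidiagonal.antidiagonal m,
              cf p.1 (Edef^c) * cf p.2 (PowerSeries.exp ℚ)) := by
            rw [hsum, ← Finset.mul_sum]
            ring
        _ = (m.factorial : ℚ) * (((m:ℚ)+1) * cf (m+1) (Edef^c)) := by rw [hg]
        _ = (((m+1).factorial : ℕ) : ℚ) * cf (m+1) (Edef^c) := by
            rw [hfact]; ring

lemma hA_fact : ∀ n : ℕ, ((n:ℚ)+1) * cf n A = cf n (Edef^(n+1)) := by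
  intro n
  have h1 : ((n:ℚ)+1) * (aCount n : ℚ) = ((Fc (n+1) n : ℕ) : ℚ) := by
    exact_mod_cast key_count n
  have h2 := claimC n (n+1)
  have h3 : cf n A = (aCount n : ℚ) / (n.factorial : ℚ) := by
    simp [A, PowerSeries.coeff_mk]
  have hne : (n.factorial : ℚ) ≠ 0 := Nat.cast_ne_zero.2 (Nat.factorial_ne_zero _)
  rw [h3]
  rw [h2] at h1
  field_simp
  first
  | linear_combination h1
  | linear_combination -h1

end SC

-- ======== numerics ========

lemma Fc_one (c : ℕ) : Fc c 1 = c := by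
  rw [Fc_succ]
  simp [Fc_zero]

lemma Fc_two (c : ℕ) : Fc c 2 = c * (1 + c) := by
  rw [Fc_succ, Finset.sum_range_succ, Finset.sum_range_one, Fc_zero, Fc_one]
  norm_num

lemma Fc_three (c : ℕ) : Fc c 3 = c * (1 + 3*c + c^2) := by
  rw [Fc_succ, Finset.sum_range_succ, Finset.sum_range_succ, Finset.sum_range_one,
    Fc_zero, Fc_one, Fc_two]
  have c1 : Nat.choose 2 1 = 2 := rfl
  have c2 : Nat.choose 2 2 = 1 := rfl
  have c0 : Nat.choose 2 0 = 1 := rfl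
  rw [c0, c1, c2]
  ring

lemma Fc_four (c : ℕ) : Fc c 4 = c * (1 + 7*c + 6*c^2 + c^3) := by
  rw [Fc_succ, Finset.sum_range_succ, Finset.sum_range_succ, Finset.sum_range_succ,
    Finset.sum_range_one, Fc_zero, Fc_one, Fc_two, Fc_three]
  have c0 : Nat.choose 3 0 = 1 := rfl
  have c1 : Nat.choose 3 1 = 3 := rfl
  have c2 : Nat.choose 3 2 = 3 := rfl
  have c3 : Nat.choose 3 3 = 1 := rfl
  rw [c0, c1, c2, c3]
  ring

lemma Fc_five (c : ℕ) : Fc c 5 = c * (1 + 15*c + 25*c^2 + 10*c^3 + c^4) := by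
  rw [Fc_succ, Finset.sum_range_succ, Finset.sum_range_succ, Finset.sum_range_succ,
    Finset.sum_range_succ, Finset.sum_range_one, Fc_zero, Fc_one, Fc_two, Fc_three, Fc_four]
  have c0 : Nat.choose 4 0 = 1 := rfl
  have c1 : Nat.choose 4 1 = 4 := rfl
  have c2 : Nat.choose 4 2 = 6 := rfl
  have c3 : Nat.choose 4 3 = 4 := rfl
  have c4 : Nat.choose 4 4 = 1 := rfl
  rw [c0, c1, c2, c3, c4]
  ring


end

/-- `A(t) = exp (exp (t·A(t)) − 1)` in `ℚ⟦t⟧`, and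
`a(0), …, a(5) = 1, 1, 4, 29, 311, 4447`. -/
theorem aEGF_functional_equation :
    A = seriesComp (PowerSeries.exp ℚ)
          (seriesComp (PowerSeries.exp ℚ) (PowerSeries.X * A) - 1) ∧
    aCount 0 = 1 ∧ aCount 1 = 1 ∧ aCount 2 = 4 ∧ aCount 3 = 29 ∧
    aCount 4 = 311 ∧ aCount 5 = 4447 := by
  refine ⟨?_, ?_, ?_, ?_, ?_, ?_, ?_⟩
  · have hglue := SC.lagrange_glue SC.Edef SC.constantCoeff_Edef A SC.hA_fact
    rw [SC.final_form (PowerSeries.X * A) (by simp)]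
    exact hglue
  · have k := key_count 0
    rw [Fc_zero] at k
    omega
  · have k := key_count 1
    rw [Fc_one] at k
    omega
  · have k := key_count 2
    rw [Fc_two] at k
    norm_num at k
    omega
  · have k := key_count 3
    rw [Fc_three] at k
    norm_num at k
    omega
  · have k := key_count 4
    rw [Fc_four] at k
    norm_num at k
    omega
  · have k := key_count 5
    rw [Fc_five] at k
    norm_num at k
    omega
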